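/- Let G be a Polish group. The following are equivalent: (1) G is CLI; (2) for every open identity neighbourhood V of G there is an ordinal α with rk(V, G) ≤ α (i.e., rk(G) < ∞); (3) there is a countable ordinal α such that G is α-balanced (i.e., rk(G) < ω₁). -/

import Mathlib

universe u v w x

/-- The conjugate `g W g⁻¹` of a subset `W` of a group by the element `g`. -/
def conjSet {G : Type u} [Group G] (g : G) (W : Set G) : Set G :=
  (fun x => g * x * g⁻¹) '' W

/-- `RkLe V U β` asserts that the ordinal rank `rk(V, U)` is at most `β`:
either `U ⊆ V` (rank `0`), or there is an open identity neighbourhood `W`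
such that `rk(V, g W g⁻¹) < β` for every `g ∈ U`. -/
def RkLe {G : Type u} [Group G] [TopologicalSpace G] (V U : Set G) (β : Ordinal.{v}) : Prop :=
  U ⊆ V ∨ ∃ W : Set G, IsOpen W ∧ (1 : G) ∈ W ∧
    ∀ g ∈ U, ∃ γ : Ordinal.{v}, ∃ _ : γ < β, RkLe V (conjSet g W) γ
termination_by β

/-- `rk(G) ≤ α`, i.e. the topological group `G` is `α`-balanced:
`rk(V, G) + 1 ≤ α` for every open identity neighbourhood `V`. -/
def IsBalanced (G : Type u) [Group G] [TopologicalSpace G] (α : Ordinal.{v}) : Prop :=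
  ∀ V : Set G, IsOpen V → (1 : G) ∈ V → ∃ β : Ordinal.{v}, β < α ∧ RkLe V Set.univ β

/-- `rk(G) = α`: the least `α` such that `G` is `α`-balanced. -/
def HasRk (G : Type u) [Group G] [TopologicalSpace G] (α : Ordinal.{v}) : Prop :=
  IsBalanced G α ∧ ∀ β : Ordinal.{v}, β < α → ¬IsBalanced G β

/-- A topological group is CLI if it admits a metric, compatible with its topology,
that is complete and left-invariant. -/
def IsCLI (G : Type u) [Group G] [t : TopologicalSpace G] : Prop :=
  ∃ m : MetricSpace G,
    m.toPseudoMetricSpace.toUniformSpace.toTopologicalSpace = t ∧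
    @CompleteSpace G m.toPseudoMetricSpace.toUniformSpace ∧
    ∀ g h h' : G,
      @dist G m.toPseudoMetricSpace.toDist (g * h) (g * h') =
        @dist G m.toPseudoMetricSpace.toDist h h'


set_option linter.unusedSectionVars false
set_option maxHeartbeats 1000000

open Filter Topology Set
open scoped Pointwise

section RkLeBasic

set_option linter.unusedSectionVars false
variable {G : Type u} [Group G] [TopologicalSpace G]

theorem mem_conjSet_iff {g x : G} {W : Set G} : x ∈ conjSet g W ↔ g⁻¹ * x * g ∈ W := by
  constructor
  · rintro ⟨w, hw, rfl⟩; simpa [mul_assoc] using hw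
  · intro h; exact ⟨g⁻¹ * x * g, h, by group⟩

theorem conjSet_mono {g : G} {W W' : Set G} (h : W ⊆ W') : conjSet g W ⊆ conjSet g W' :=
  Set.image_mono h

theorem one_mem_conjSet {g : G} {W : Set G} (h : (1 : G) ∈ W) : (1 : G) ∈ conjSet g W :=
  mem_conjSet_iff.2 (by simpa using h)

theorem RkLe.mono_ord {V U : Set G} {β β' : Ordinal.{v}} (h : RkLe V U β) (hb : β ≤ β') :
    RkLe V U β' := by
  rw [RkLe] at h ⊢
  refine h.imp id ?_
  rintro ⟨W, hW, h1, hrec⟩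
  exact ⟨W, hW, h1, fun g hg => by
    obtain ⟨γ, hγ, hr⟩ := hrec g hg
    exact ⟨γ, lt_of_lt_of_le hγ hb, hr⟩⟩

theorem RkLe.mono_set {V U U' : Set G} {β : Ordinal.{v}} (h : RkLe V U β) (hU : U' ⊆ U) :
    RkLe V U' β := by
  rw [RkLe] at h ⊢
  refine h.imp (fun h => hU.trans h) ?_
  rintro ⟨W, hW, h1, hrec⟩
  exact ⟨W, hW, h1, fun g hg => hrec g (hU hg)⟩

theorem RkLe.mono_target {V V' U : Set G} {β : Ordinal.{v}} (hV : V ⊆ V') (h : RkLe V U β) :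
    RkLe V' U β := by
  induction β using Ordinal.induction generalizing U with
  | h β IH =>
    rw [RkLe] at h ⊢
    refine h.imp (fun h => h.trans hV) ?_
    rintro ⟨W, hW, h1, hrec⟩
    refine ⟨W, hW, h1, fun g hg => ?_⟩
    obtain ⟨γ, hγ, hr⟩ := hrec g hg
    exact ⟨γ, hγ, IH γ hγ hr⟩

end RkLeBasic

section WFaux

variable {α : Type w}

theorem exists_descending_of_not_wf {r : α → α → Prop} (h : ¬ WellFounded r) :
    ∃ f : ℕ → α, ∀ n, r (f (n + 1)) (f n) := by
  classical
  have hex : ∃ a, ¬ Acc r a := by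
    by_contra hc
    push_neg at hc
    exact h ⟨hc⟩
  have key : ∀ a, ¬ Acc r a → ∃ b, r b a ∧ ¬ Acc r b := by
    intro a ha
    by_contra hc
    push_neg at hc
    exact ha (Acc.intro a fun b hb => hc b hb)
  choose! F hF1 hF2 using key
  obtain ⟨a0, ha0⟩ := hex
  have hacc : ∀ n, ¬ Acc r ((fun n => F^[n] a0) n) := by
    intro n
    induction n with
    | zero => simpa using ha0
    | succ n ih =>
      show ¬ Acc r (F^[n+1] a0)
      rw [Function.iterate_succ_apply']
      exact hF2 _ ih
  refine ⟨fun n => F^[n] a0, fun n => ?_⟩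
  have := hF1 _ (hacc n)
  show r (F^[n+1] a0) (F^[n] a0)
  rw [Function.iterate_succ_apply']
  exact this

/-- The rank of a well-founded relation on a countable type is countable. -/
theorem rank_lt_omega1 {α : Type} [Countable α] (r : α → α → Prop) [hwf : IsWellFounded α r]
    (a : α) : IsWellFounded.rank r a < (Cardinal.aleph 1).ord := by
  induction a using IsWellFounded.induction r with
  | ind a IH =>
    rw [IsWellFounded.rank_eq]
    have hlim : Order.IsSuccLimit ((Cardinal.aleph 1).ord) :=
      Cardinal.isSuccLimit_ord Cardinal.aleph0_lt_aleph_one.le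
    refine Ordinal.iSup_lt_ord_lift ?_ ?_
    · rw [Cardinal.lift_id]
      refine lt_of_le_of_lt Cardinal.mk_le_aleph0 ?_
      rw [Cardinal.isRegular_aleph_one.cof_eq]
      exact Cardinal.aleph0_lt_aleph_one
    · rintro ⟨b, hb⟩
      exact hlim.succ_lt (IH b hb)

end WFaux

/-! ### Direction A: CLI implies countably balanced -/

section DirA

variable {G : Type u} [MetricSpace G] [Group G] [IsTopologicalGroup G]

/-- The right ball: `{x | dist (x*a) a < ε}`, equal to `a ⬝ B_ε ⬝ a⁻¹` for a
left-invariant metric. -/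
def rightBall (a : G) (ε : ℝ) : Set G := {x | dist (x * a) a < ε}

theorem isOpen_rightBall {a : G} {ε : ℝ} : IsOpen (rightBall a ε) := by
  have : rightBall a ε = (fun x => x * a) ⁻¹' Metric.ball a ε := by
    ext x; simp [rightBall, Metric.mem_ball]
  rw [this]
  exact Metric.isOpen_ball.preimage (continuous_mul_right a)

theorem one_mem_rightBall {a : G} {ε : ℝ} (hε : 0 < ε) : (1 : G) ∈ rightBall a ε := by
  simp [rightBall, hε]

variable (hinv : ∀ g h h' : G, dist (g * h) (g * h') = dist h h')

include hinv

theorem conj_rightBall (g a : G) (ε : ℝ) :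
    conjSet g (rightBall a ε) = rightBall (g * a) ε := by
  ext x
  rw [mem_conjSet_iff]
  show dist (g⁻¹ * x * g * a) a < ε ↔ dist (x * (g * a)) (g * a) < ε
  rw [← hinv g (g⁻¹ * x * g * a) a]
  have : g * (g⁻¹ * x * g * a) = x * (g * a) := by group
  rw [this]

theorem rightBall_subset {a b : G} {ε δ : ℝ} (h : 2 * dist a b + ε ≤ δ) :
    rightBall a ε ⊆ rightBall b δ := by
  intro x hx
  have h1 : dist (x * b) (x * a) = dist b a := hinv x b a
  have h2 : dist (x * a) a < ε := hx
  have h3 : dist (x * b) b ≤ dist (x * b) (x * a) + dist (x * a) a + dist a b :=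
    dist_triangle4 _ _ _ _
  have : dist b a = dist a b := dist_comm b a
  show dist (x * b) b < δ
  rw [h1, this] at h3
  linarith

/-- The auxiliary countable relation whose rank bounds `rk(V, ·)` on right balls. -/
def BallRel (V : Set G) (e : ℕ → G) (p q : ℕ × ℚ) : Prop :=
  0 < p.2 ∧ 0 < q.2 ∧ p.2 ≤ q.2 / 4 ∧ dist (e p.1) (e q.1) < 2 * (q.2 : ℝ) ∧
    ∃ b, b ∉ V ∧ dist (b * e q.1) (e q.1) < (q.2 : ℝ)

omit hinv in
theorem rel_wf [CompleteSpace G] {V : Set G} {e : ℕ → G} (hV : IsOpen V) (h1V : (1 : G) ∈ V) :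
    WellFounded (BallRel V e) := by
  by_contra h
  obtain ⟨f, hf⟩ := exists_descending_of_not_wf h
  set q : ℕ → ℚ := fun n => (f n).2 with hq
  set g : ℕ → G := fun n => e (f n).1 with hg
  have hqpos : ∀ n, 0 < q n := fun n => (hf n).2.1
  have hqstep : ∀ n, q (n + 1) ≤ q n / 4 := fun n => (hf n).2.2.1
  have hqgeo : ∀ n, (q n : ℝ) ≤ (q 0 : ℝ) * (1 / 4) ^ n := by
    intro n
    induction n with
    | zero => simp
    | succ n ih =>
      have := hqstep n
      have h4 : (q (n + 1) : ℝ) ≤ (q n : ℝ) / 4 := by exact_mod_cast this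
      rw [pow_succ]
      calc (q (n+1) : ℝ) ≤ (q n : ℝ) / 4 := h4
        _ ≤ ((q 0 : ℝ) * (1/4)^n) / 4 := by linarith
        _ = (q 0 : ℝ) * ((1/4)^n * (1/4)) := by ring
  have hgdist : ∀ n, dist (g n) (g (n + 1)) ≤ 2 * (q 0 : ℝ) * (1 / 4) ^ n := by
    intro n
    have := (hf n).2.2.2.1
    rw [dist_comm]
    calc dist (g (n+1)) (g n) ≤ 2 * (q n : ℝ) := le_of_lt this
      _ ≤ 2 * ((q 0 : ℝ) * (1/4)^n) := by have := hqgeo n; linarith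
      _ = 2 * (q 0 : ℝ) * (1/4)^n := by ring
  have hcauchy : CauchySeq g := cauchySeq_of_le_geometric (1/4) (2 * (q 0 : ℝ)) (by norm_num) hgdist
  obtain ⟨a, ha⟩ := cauchySeq_tendsto_of_complete hcauchy
  have hb : ∀ n, ∃ b, b ∉ V ∧ dist (b * g n) (g n) < (q n : ℝ) := fun n => (hf n).2.2.2.2
  choose b hb1 hb2 using hb
  have hq0 : Tendsto (fun n => (q n : ℝ)) atTop (𝓝 0) := by
    apply squeeze_zero (fun n => le_of_lt (by exact_mod_cast hqpos n)) hqgeo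
    have : Tendsto (fun n : ℕ => (1/4 : ℝ)^n) atTop (𝓝 0) :=
      tendsto_pow_atTop_nhds_zero_of_lt_one (by norm_num) (by norm_num)
    simpa using this.const_mul (q 0 : ℝ)
  have hga : Tendsto (fun n => dist (g n) a) atTop (𝓝 0) := tendsto_iff_dist_tendsto_zero.1 ha
  have hbg : Tendsto (fun n => b n * g n) atTop (𝓝 a) := by
    rw [tendsto_iff_dist_tendsto_zero]
    apply squeeze_zero (fun n => dist_nonneg) (g := fun n => (q n : ℝ) + dist (g n) a)
    · intro n
      calc dist (b n * g n) a ≤ dist (b n * g n) (g n) + dist (g n) a := dist_triangle _ _ _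
        _ ≤ (q n : ℝ) + dist (g n) a := by have := hb2 n; linarith
    · simpa using hq0.add hga
  have hbn : Tendsto b atTop (𝓝 (1 : G)) := by
    have : Tendsto (fun n => (b n * g n) * (g n)⁻¹) atTop (𝓝 (a * a⁻¹)) :=
      hbg.mul ha.inv
    simpa [mul_inv_cancel] using this
  have : ∀ᶠ n in atTop, b n ∈ V := hbn.eventually_mem (hV.mem_nhds h1V)
  obtain ⟨n, hn⟩ := this.exists
  exact hb1 n hn

include hinv in
/-- Main lemma for direction A: bounded rank for any open identity neighbourhood. -/
theorem mainA [CompleteSpace G] {V : Set G} {e : ℕ → G} (hV : IsOpen V) (h1V : (1 : G) ∈ V)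
    (he : DenseRange e) :
    ∃ σ : Ordinal.{0}, σ < (Cardinal.aleph 1).ord ∧ RkLe V (Set.univ : Set G)
      (Ordinal.lift.{v, 0} σ) := by
  letI : IsWellFounded (ℕ × ℚ) (BallRel V e) := ⟨rel_wf hV h1V⟩
  set rk : ℕ × ℚ → Ordinal.{0} := IsWellFounded.rank (BallRel V e) with hrk
  have hlim : Order.IsSuccLimit ((Cardinal.aleph 1).ord) :=
    Cardinal.isSuccLimit_ord Cardinal.aleph0_lt_aleph_one.le
  have hcof : ((Cardinal.aleph 1).ord).cof = Cardinal.aleph 1 :=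
    Cardinal.isRegular_aleph_one.cof_eq
  have hrklt : ∀ p, rk p < (Cardinal.aleph 1).ord := fun p => rank_lt_omega1 _ p
  -- the key wf-induction claim
  have claim2 : ∀ p : ℕ × ℚ, 0 < p.2 →
      RkLe V (rightBall (e p.1) (p.2 : ℝ)) (Ordinal.lift.{v, 0} (rk p)) := by
    intro p
    refine IsWellFounded.induction (BallRel V e)
      (motive := fun p => 0 < p.2 → RkLe V (rightBall (e p.1) (p.2 : ℝ)) (Ordinal.lift.{v, 0} (rk p)))
      p ?_
    intro x IH hx
    by_cases hsub : rightBall (e x.1) (x.2 : ℝ) ⊆ V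
    · rw [RkLe]; exact Or.inl hsub
    · rw [RkLe]; right
      obtain ⟨bb, hbbmem, hbbV⟩ := Set.not_subset.1 hsub
      have hxr : (0 : ℝ) < (x.2 : ℝ) := by exact_mod_cast hx
      refine ⟨rightBall (e x.1) ((x.2 : ℝ) / 8), isOpen_rightBall,
        one_mem_rightBall (by linarith), ?_⟩
      intro g hg
      have hgd : dist (g * e x.1) (e x.1) < (x.2 : ℝ) := hg
      obtain ⟨k', hk'⟩ := he.exists_dist_lt (g * e x.1) (show (0:ℝ) < (x.2 : ℝ)/64 by linarith)
      set q' : ℚ := 3 * x.2 / 16 with hq'def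
      have hq' : 0 < q' := by rw [hq'def]; linarith
      have hq'r : (q' : ℝ) = 3 * (x.2 : ℝ) / 16 := by push_cast [hq'def]; ring
      have hrel : BallRel V e (k', q') x := by
        refine ⟨hq', hx, by rw [hq'def]; linarith, ?_, ⟨bb, hbbV, hbbmem⟩⟩
        calc dist (e k') (e x.1) ≤ dist (e k') (g * e x.1) + dist (g * e x.1) (e x.1) :=
              dist_triangle _ _ _
          _ < (x.2 : ℝ)/64 + (x.2 : ℝ) := by rw [dist_comm]; linarith
          _ < 2 * (x.2 : ℝ) := by linarith
      refine ⟨Ordinal.lift.{v,0} (rk (k', q')),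
        ⟨Ordinal.lift_lt.2 (IsWellFounded.rank_lt_of_rel hrel), ?_⟩⟩
      have hIH := IH (k', q') hrel hq'
      refine RkLe.mono_set hIH ?_
      rw [conj_rightBall hinv]
      refine rightBall_subset hinv ?_
      rw [hq'r]
      have := dist_comm (e k') (g * e x.1)
      simp only []
      linarith [hk', this]
  -- one more step for `univ`
  refine ⟨⨆ p : ℕ × ℚ, Order.succ (rk p), ?_, ?_⟩
  · refine Ordinal.iSup_lt_ord_lift ?_ fun p => hlim.succ_lt (hrklt p)
    rw [Cardinal.lift_id, hcof]
    exact lt_of_le_of_lt Cardinal.mk_le_aleph0 Cardinal.aleph0_lt_aleph_one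
  · rw [RkLe]; right
    refine ⟨rightBall (1 : G) 1, isOpen_rightBall, one_mem_rightBall one_pos, ?_⟩
    intro g _
    obtain ⟨k', hk'⟩ := he.exists_dist_lt (g * 1) (show (0:ℝ) < 1/8 by norm_num)
    refine ⟨Ordinal.lift.{v,0} (rk (k', 3/2)), ⟨?_, ?_⟩⟩
    · rw [Ordinal.lift_lt]
      exact lt_of_lt_of_le (Order.lt_succ _) (Ordinal.le_iSup (fun p => Order.succ (rk p)) _)
    · have h32 : (0:ℚ) < 3/2 := by norm_num
      have := claim2 (k', 3/2) h32
      refine RkLe.mono_set this ?_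
      rw [conj_rightBall hinv]
      refine rightBall_subset hinv ?_
      push_cast
      linarith

end DirA


section AssembleA

theorem cli_to_balanced {G : Type u} [Group G] [t : TopologicalSpace G]
    [IsTopologicalGroup G] [PolishSpace G] (h : IsCLI G) :
    ∃ α : Ordinal.{v}, α.card ≤ Cardinal.aleph0 ∧ IsBalanced G α := by
  classical
  obtain ⟨m, hmt, hmc, hmi⟩ := h
  subst hmt
  letI : MetricSpace G := m
  haveI : CompleteSpace G := hmc
  haveI : Nonempty G := ⟨1⟩
  obtain ⟨e, he⟩ := TopologicalSpace.exists_dense_seq G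
  obtain ⟨bs, hbc, -, hbasis⟩ := TopologicalSpace.exists_countable_basis G
  set T : Set (Set G) := {B ∈ bs | (1 : G) ∈ B} with hT
  have hTc : T.Countable := hbc.mono (Set.sep_subset _ _)
  have hTne : T.Nonempty := by
    obtain ⟨B, hB, h1B, -⟩ :=
      hbasis.exists_subset_of_mem_open (Set.mem_univ (1 : G)) isOpen_univ
    exact ⟨B, hB, h1B⟩
  obtain ⟨f, hfT⟩ := hTc.exists_eq_range hTne
  have hmem : ∀ n, IsOpen (f n) ∧ (1 : G) ∈ f n := by
    intro n
    have : f n ∈ T := by rw [hfT]; exact Set.mem_range_self n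
    exact ⟨hbasis.isOpen this.1, this.2⟩
  have hmain : ∀ n : ℕ, ∃ σ : Ordinal.{0}, σ < (Cardinal.aleph 1).ord ∧
      RkLe (f n) (Set.univ : Set G) (Ordinal.lift.{v, 0} σ) :=
    fun n => mainA hmi (hmem n).1 (hmem n).2 he
  choose σf hσ1 hσ2 using hmain
  have hα₀lt : (⨆ n, Order.succ (σf n)) < (Cardinal.aleph 1).ord := by
    refine Ordinal.iSup_lt_ord_lift ?_ fun n =>
      (Cardinal.isSuccLimit_ord Cardinal.aleph0_lt_aleph_one.le).succ_lt (hσ1 n)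
    rw [Cardinal.lift_id, Cardinal.isRegular_aleph_one.cof_eq]
    exact lt_of_le_of_lt Cardinal.mk_le_aleph0 Cardinal.aleph0_lt_aleph_one
  refine ⟨Ordinal.lift.{v, 0} (⨆ n, Order.succ (σf n)), ?_, ?_⟩
  · rw [← Ordinal.lift_card]
    have h1 : (⨆ n, Order.succ (σf n)).card < Cardinal.aleph 1 := Cardinal.lt_ord.1 hα₀lt
    rw [← Cardinal.succ_aleph0, Order.lt_succ_iff] at h1
    calc Cardinal.lift.{v,0} (⨆ n, Order.succ (σf n)).card
        ≤ Cardinal.lift.{v,0} Cardinal.aleph0 := Cardinal.lift_le.2 h1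
      _ = Cardinal.aleph0 := Cardinal.lift_aleph0
  · intro V hVo hV1
    obtain ⟨B, hBbs, hB1, hBV⟩ := hbasis.exists_subset_of_mem_open hV1 hVo
    have : B ∈ T := ⟨hBbs, hB1⟩
    rw [hfT] at this
    obtain ⟨n, hn⟩ := this
    refine ⟨Ordinal.lift.{v, 0} (σf n), ?_, ?_⟩
    · rw [Ordinal.lift_lt]
      exact lt_of_lt_of_le (Order.lt_succ _) (Ordinal.le_iSup (fun n => Order.succ (σf n)) n)
    · have h1 : RkLe B (Set.univ : Set G) (Ordinal.lift.{v, 0} (σf n)) := hn ▸ hσ2 n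
      exact RkLe.mono_target hBV h1

end AssembleA

/-! ### Direction B -/

section DirB

variable {G : Type u} [Group G] [TopologicalSpace G] [IsTopologicalGroup G]

/-- A sequence is left-Cauchy in the neighbourhood sense. -/
def LeftCauchy {G : Type u} [Group G] [TopologicalSpace G] (x : ℕ → G) : Prop :=
  ∀ O : Set G, IsOpen O → (1 : G) ∈ O → ∃ N, ∀ m n, N ≤ m → N ≤ n → (x n)⁻¹ * x m ∈ O

theorem claimB (β : Ordinal.{v}) :
    ∀ V U : Set G, RkLe V U β → ∀ x : ℕ → G, LeftCauchy x →
      ∀ z : G, ∀ N₀ : ℕ, (∀ m, N₀ ≤ m → x m * z⁻¹ ∈ U) →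
      ∃ z' N', ∀ m, N' ≤ m → x m * z'⁻¹ ∈ V := by
  induction β using Ordinal.induction with
  | h β IH =>
    intro V U h x hlc z N₀ hz
    rw [RkLe] at h
    rcases h with h | ⟨W, hWo, hW1, hrec⟩
    · exact ⟨z, N₀, fun m hm => h (hz m hm)⟩
    · set O : Set G := (fun w => z * w * z⁻¹) ⁻¹' W with hO
      have hOo : IsOpen O := hWo.preimage (by continuity)
      have hO1 : (1 : G) ∈ O := by
        show z * 1 * z⁻¹ ∈ W
        simpa using hW1
      obtain ⟨N₁, hN₁⟩ := hlc O hOo hO1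
      set m₀ := max N₀ N₁ with hm₀
      set g := x m₀ * z⁻¹ with hgdef
      obtain ⟨γ, hγ, hr⟩ := hrec g (hz m₀ (le_max_left _ _))
      have hmem : ∀ k, m₀ ≤ k → x k * (x m₀)⁻¹ ∈ conjSet g W := by
        intro k hk
        have hw : (x m₀)⁻¹ * x k ∈ O :=
          hN₁ k m₀ ((le_max_right _ _).trans hk) (le_max_right _ _)
        refine ⟨z * ((x m₀)⁻¹ * x k) * z⁻¹, hw, ?_⟩
        rw [hgdef]
        group
      exact IH γ hγ V (conjSet g W) hr x hlc (x m₀) m₀ hmem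

/-- A balanced Polish group: every left-Cauchy sequence is right-Cauchy,
indeed right-trapped. -/
theorem rightCauchy_of_balanced {α : Ordinal.{v}} (hbal : IsBalanced G α) {x : ℕ → G}
    (hlc : LeftCauchy x) :
    ∀ O : Set G, IsOpen O → (1 : G) ∈ O → ∃ N, ∀ m n, N ≤ m → N ≤ n →
      x m * (x n)⁻¹ ∈ O := by
  intro O hOo hO1
  obtain ⟨V, hVo, hV1, hVsub⟩ : ∃ V : Set G, IsOpen V ∧ (1:G) ∈ V ∧ V * V⁻¹ ⊆ O := by
    obtain ⟨V, hVo, hV1, hVV⟩ := exists_open_nhds_one_mul_subset (hOo.mem_nhds hO1)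
    refine ⟨V ∩ V⁻¹, hVo.inter (hVo.preimage continuous_inv), ⟨hV1, by simpa using hV1⟩, ?_⟩
    rintro y ⟨a, ⟨ha1, -⟩, b, hb, rfl⟩
    have hb' : b ∈ V := by
      have h2 := (Set.mem_inv.1 hb).2
      simpa using h2
    exact hVV (Set.mul_mem_mul ha1 hb')
  obtain ⟨β, -, hβ⟩ := hbal V hVo hV1
  obtain ⟨z', N', hz'⟩ := claimB β V Set.univ hβ x hlc 1 0 (fun m _ => Set.mem_univ _)
  refine ⟨N', fun m n hm hn => ?_⟩
  have h1 : x m * z'⁻¹ ∈ V := hz' m hm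
  have h2 : x n * z'⁻¹ ∈ V := hz' n hn
  have : x m * (x n)⁻¹ = (x m * z'⁻¹) * (x n * z'⁻¹)⁻¹ := by group
  rw [this]
  exact hVsub (Set.mul_mem_mul h1 (Set.inv_mem_inv.2 h2))

end DirB

section Mazurkiewicz

/-- Mazurkiewicz: a Polish subspace (given as the range of an inducing map from a
Polish space) of a metric space is a Gδ set. -/
theorem isGδ_range_of_polish {X : Type w} [MetricSpace X] {Y : Type x} [TopologicalSpace Y]
    [PolishSpace Y] {f : Y → X} (hf : Topology.IsInducing f) (hcont : Continuous f) :
    IsGδ (Set.range f) := by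
  classical
  letI := TopologicalSpace.upgradeIsCompletelyMetrizable Y
  haveI : CompleteSpace Y := inferInstance
  set A : Set X := ⋂ n : ℕ, ⋃₀ {V : Set X | IsOpen V ∧
      ∀ a b : Y, f a ∈ V → f b ∈ V → dist a b ≤ 1 / (n + 1)} with hA
  have hAGδ : IsGδ A :=
    IsGδ.iInter_of_isOpen fun n => isOpen_sUnion fun V hV => hV.1
  have hclGδ : IsGδ (closure (Set.range f)) := IsClosed.isGδ isClosed_closure
  have hmain : Set.range f = A ∩ closure (Set.range f) := by
    apply Set.Subset.antisymm
    · rintro x ⟨y, rfl⟩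
      refine ⟨?_, subset_closure ⟨y, rfl⟩⟩
      rw [hA]
      refine Set.mem_iInter.2 fun n => ?_
      have hball : IsOpen (Metric.ball y (1 / (2 * (n + 1)))) := Metric.isOpen_ball
      rw [hf.isOpen_iff] at hball
      obtain ⟨V, hVo, hVeq⟩ := hball
      refine ⟨V, ⟨hVo, ?_⟩, ?_⟩
      · intro a b ha hb
        have ha' : a ∈ Metric.ball y (1 / (2 * (n+1))) := by rw [← hVeq]; exact ha
        have hb' : b ∈ Metric.ball y (1 / (2 * (n+1))) := by rw [← hVeq]; exact hb
        rw [Metric.mem_ball] at ha' hb'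
        have := dist_triangle a y b
        have h1 : dist y b = dist b y := dist_comm y b
        have hn : (0:ℝ) < n + 1 := by positivity
        have : dist a b ≤ 1 / (2*(n+1)) + 1 / (2*(n+1)) := by
          rw [h1] at this
          linarith
        have hne : (2:ℝ) * ((n:ℝ)+1) ≠ 0 := by positivity
        have heq : 1 / (2*((n:ℝ)+1)) + 1 / (2*((n:ℝ)+1)) = 1 / ((n:ℝ)+1) := by
          rw [← add_div]
          rw [div_eq_div_iff hne (by positivity : ((n:ℝ)+1) ≠ 0)]
          ring
        linarith
      · have : y ∈ Metric.ball y (1 / (2 * (n+1))) := by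
          rw [Metric.mem_ball, dist_self]
          positivity
        rw [← hVeq] at this
        exact this
    · rintro x ⟨hxA, hxcl⟩
      rw [hA] at hxA
      have hV : ∀ n : ℕ, ∃ V : Set X, (IsOpen V ∧
          ∀ a b : Y, f a ∈ V → f b ∈ V → dist a b ≤ 1 / (n + 1)) ∧ x ∈ V := by
        intro n
        have := Set.mem_iInter.1 hxA n
        obtain ⟨V, hV1, hV2⟩ := this
        exact ⟨V, hV1, hV2⟩
      choose V hV1 hV2 using hV
      have hyn : ∀ n : ℕ, ∃ y : Y,
          f y ∈ (⋂ k ∈ Finset.range (n+1), V k) ∩ Metric.ball x (1/(n+1)) := by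
        intro n
        have hopen : IsOpen ((⋂ k ∈ Finset.range (n+1), V k) ∩ Metric.ball x (1/(n+1))) :=
          (isOpen_biInter_finset fun k _ => (hV1 k).1).inter Metric.isOpen_ball
        have hxmem : x ∈ (⋂ k ∈ Finset.range (n+1), V k) ∩ Metric.ball x (1/(n+1)) := by
          refine ⟨Set.mem_iInter₂.2 fun k _ => hV2 k, ?_⟩
          rw [Metric.mem_ball, dist_self]
          positivity
        obtain ⟨w, hw1, hw2⟩ := (mem_closure_iff.1 hxcl) _ hopen hxmem
        obtain ⟨y, rfl⟩ := hw2
        exact ⟨y, hw1⟩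
      choose y hy using hyn
      have hycauchy : CauchySeq y := by
        rw [Metric.cauchySeq_iff]
        intro ε hε
        obtain ⟨N, hN⟩ := exists_nat_one_div_lt hε
        refine ⟨N, fun m hm n hn => ?_⟩
        have hm' : f (y m) ∈ V N := by
          have := (hy m).1
          exact Set.mem_iInter₂.1 this N (Finset.mem_range.2 (by omega))
        have hn' : f (y n) ∈ V N := by
          have := (hy n).1
          exact Set.mem_iInter₂.1 this N (Finset.mem_range.2 (by omega))
        have := (hV1 N).2 (y m) (y n) hm' hn'
        calc dist (y m) (y n) ≤ 1 / (N + 1) := this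
          _ < ε := by exact_mod_cast hN
      obtain ⟨z, hz⟩ := cauchySeq_tendsto_of_complete hycauchy
      have h1 : Filter.Tendsto (fun n => f (y n)) Filter.atTop (𝓝 (f z)) :=
        (hcont.tendsto z).comp hz
      have h2 : Filter.Tendsto (fun n => f (y n)) Filter.atTop (𝓝 x) := by
        rw [tendsto_iff_dist_tendsto_zero]
        apply squeeze_zero (fun n => dist_nonneg) (g := fun n : ℕ => 1/((n:ℝ)+1))
        · intro n
          have := (hy n).2
          rw [Metric.mem_ball] at this
          exact le_of_lt this
        · exact tendsto_one_div_add_atTop_nhds_zero_nat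
      have : x = f z := tendsto_nhds_unique h2 h1
      exact ⟨z, this.symm⟩
  rw [hmain]
  exact hAGδ.inter hclGδ

end Mazurkiewicz

theorem isGδ_preimage {X : Type w} {Y : Type x} [TopologicalSpace X] [TopologicalSpace Y]
    {s : Set Y} (h : IsGδ s) {f : X → Y} (hf : Continuous f) : IsGδ (f ⁻¹' s) := by
  obtain ⟨T, hTo, hTc, rfl⟩ := h
  rw [Set.preimage_sInter]
  refine IsGδ.biInter hTc fun t ht => ?_
  exact ((hTo t ht).preimage hf).isGδ

section RaikovBaire

open UniformSpace

/-- In a Polish group with a left-invariant compatible metric, a sequence that is both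
left- and right-Cauchy converges. -/
theorem leftRightCauchy_tendsto {G : Type u} [Group G] [t : TopologicalSpace G]
    [IsTopologicalGroup G] [PolishSpace G] (m : MetricSpace G)
    (hmt : m.toPseudoMetricSpace.toUniformSpace.toTopologicalSpace = t)
    (hmi : ∀ g h h' : G, @dist G m.toPseudoMetricSpace.toDist (g * h) (g * h') =
      @dist G m.toPseudoMetricSpace.toDist h h')
    (x : ℕ → G) (hlc : LeftCauchy x)
    (hrc : ∀ O : Set G, IsOpen O → (1 : G) ∈ O → ∃ N, ∀ i j, N ≤ i → N ≤ j →
      x i * (x j)⁻¹ ∈ O) :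
    ∃ a : G, Tendsto x atTop (𝓝 a) := by
  classical
  subst hmt
  letI : MetricSpace G := m
  haveI : Nonempty G := ⟨1⟩
  set X := Completion G with hX
  -- left translations and their extensions
  have hisoL : ∀ c : G, Isometry (fun y : G => c * y) := fun c =>
    Isometry.of_dist_eq fun y y' => hmi c y y'
  have hucL : ∀ c : G, UniformContinuous (fun y : G => c * y) := fun c =>
    (hisoL c).uniformContinuous
  set L : G → X → X := fun c => Completion.map (fun y => c * y) with hL
  have hLcoe : ∀ (c y : G), L c (y : X) = ((c * y : G) : X) := fun c y =>
    Completion.map_coe (hucL c) y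
  have hLiso : ∀ c : G, Isometry (L c) := by
    intro c
    apply Isometry.of_dist_eq
    intro z z'
    refine Completion.induction_on₂ z z' ?_ ?_
    · exact isClosed_eq
        ((Completion.continuous_map.comp continuous_fst).dist
          (Completion.continuous_map.comp continuous_snd))
        (continuous_fst.dist continuous_snd)
    · intro a b
      rw [hLcoe, hLcoe, Completion.dist_eq, Completion.dist_eq]
      exact hmi c a b
  have hLcomp : ∀ (c c' : G) (z : X), L c (L c' z) = L (c * c') z := by
    intro c c' z
    have h1 := Completion.map_comp (hucL c) (hucL c')
    have h2 : ((fun y : G => c * y) ∘ fun y : G => c' * y) = fun y : G => (c * c') * y := by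
      funext y; simp [Function.comp, mul_assoc]
    show (Completion.map (fun y => c * y) ∘ Completion.map (fun y => c' * y)) z = _
    rw [h1, h2]
  have hLone : ∀ z : X, L 1 z = z := by
    intro z
    have : (fun y : G => (1 : G) * y) = id := by funext y; simp
    show Completion.map (fun y => (1:G) * y) z = z
    rw [this, Completion.map_id, id]
  -- pointwise Cauchy
  have keyCauchy : ∀ c : ℕ → G, LeftCauchy c → ∀ z : X, CauchySeq fun n => L (c n) z := by
    intro c hc z
    rw [Metric.cauchySeq_iff]
    intro ε hε
    obtain ⟨y, hy⟩ := Completion.denseRange_coe.exists_dist_lt z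
      (show (0:ℝ) < ε/4 by linarith)
    set O : Set G := {w : G | dist (w * y) y < ε/4} with hO
    have hOo : IsOpen O := by
      have : O = (fun w : G => w * y) ⁻¹' Metric.ball y (ε/4) := by
        ext w; simp [hO, Metric.mem_ball]
      rw [this]
      exact Metric.isOpen_ball.preimage (continuous_mul_right y)
    have hO1 : (1 : G) ∈ O := by simp [hO]; linarith
    obtain ⟨N, hN⟩ := hc O hOo hO1
    refine ⟨N, fun i hi j hj => ?_⟩
    have h1 : L (c i) z = L (c j) (L ((c j)⁻¹ * c i) z) := by
      rw [hLcomp]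
      congr 1
      simp [mul_assoc]
    rw [h1, (hLiso (c j)).dist_eq]
    set w : G := (c j)⁻¹ * c i with hw
    have hwO : w ∈ O := hN i j hi hj
    have hd1 : dist (L w z) (L w (y : X)) = dist z (y : X) := (hLiso w).dist_eq z _
    have hd2 : dist (L w (y : X)) ((y : G) : X) < ε/4 := by
      rw [hLcoe, Completion.dist_eq]
      exact hwO
    calc dist (L w z) z
        ≤ dist (L w z) (L w (y : X)) + dist (L w (y : X)) ((y:G) : X) + dist ((y:G) : X) z :=
          dist_triangle4 _ _ _ _
      _ < ε/4 + ε/4 + ε/4 := by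
          rw [hd1, dist_comm ((y:G):X) z]
          have := hy
          gcongr
      _ < ε := by linarith
  have hlcinv : LeftCauchy fun n => (x n)⁻¹ := by
    intro O hOo hO1
    obtain ⟨N, hN⟩ := hrc O hOo hO1
    exact ⟨N, fun i j hi hj => by simpa using hN j i hj hi⟩
  choose Φ hΦ using fun z => cauchySeq_tendsto_of_complete (keyCauchy x hlc z)
  choose Ψ hΨ using fun z => cauchySeq_tendsto_of_complete (keyCauchy _ hlcinv z)
  -- Φ ∘ Ψ = id, Ψ ∘ Φ = id
  have hΦΨ : ∀ z : X, Φ (Ψ z) = z := by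
    intro z
    have hb : ∀ n, dist (Φ (Ψ z)) z ≤
        dist (Φ (Ψ z)) (L (x n) (Ψ z)) + dist (L ((x n)⁻¹) z) (Ψ z) := by
      intro n
      have h1 : L (x n) (L ((x n)⁻¹) z) = z := by
        rw [hLcomp, mul_inv_cancel, hLone]
      calc dist (Φ (Ψ z)) z = dist (Φ (Ψ z)) (L (x n) (L ((x n)⁻¹) z)) := by rw [h1]
        _ ≤ dist (Φ (Ψ z)) (L (x n) (Ψ z)) + dist (L (x n) (Ψ z)) (L (x n) (L ((x n)⁻¹) z)) :=
            dist_triangle _ _ _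
        _ = dist (Φ (Ψ z)) (L (x n) (Ψ z)) + dist (L ((x n)⁻¹) z) (Ψ z) := by
            rw [(hLiso (x n)).dist_eq, dist_comm (Ψ z) (L ((x n)⁻¹) z)]
    have hlim : Tendsto (fun n =>
        dist (Φ (Ψ z)) (L (x n) (Ψ z)) + dist (L ((x n)⁻¹) z) (Ψ z)) atTop (𝓝 0) := by
      have h1 : Tendsto (fun n => dist (Φ (Ψ z)) (L (x n) (Ψ z))) atTop (𝓝 0) := by
        have := (tendsto_const_nhds (x := Φ (Ψ z)) (f := atTop)).dist (hΦ (Ψ z))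
        simpa using this
      have h2 : Tendsto (fun n => dist (L ((x n)⁻¹) z) (Ψ z)) atTop (𝓝 0) := by
        have := (hΨ z).dist (tendsto_const_nhds (x := Ψ z) (f := atTop))
        simpa using this
      simpa using h1.add h2
    have hle : dist (Φ (Ψ z)) z ≤ 0 := ge_of_tendsto hlim (Filter.Eventually.of_forall hb)
    exact dist_eq_zero.1 (le_antisymm hle dist_nonneg)
  have hΨΦ : ∀ z : X, Ψ (Φ z) = z := by
    intro z
    have hb : ∀ n, dist (Ψ (Φ z)) z ≤
        dist (Ψ (Φ z)) (L ((x n)⁻¹) (Φ z)) + dist (L (x n) z) (Φ z) := by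
      intro n
      have h1 : L ((x n)⁻¹) (L (x n) z) = z := by
        rw [hLcomp, inv_mul_cancel, hLone]
      calc dist (Ψ (Φ z)) z = dist (Ψ (Φ z)) (L ((x n)⁻¹) (L (x n) z)) := by rw [h1]
        _ ≤ dist (Ψ (Φ z)) (L ((x n)⁻¹) (Φ z)) +
              dist (L ((x n)⁻¹) (Φ z)) (L ((x n)⁻¹) (L (x n) z)) := dist_triangle _ _ _
        _ = dist (Ψ (Φ z)) (L ((x n)⁻¹) (Φ z)) + dist (L (x n) z) (Φ z) := by
            rw [(hLiso ((x n)⁻¹)).dist_eq, dist_comm (Φ z) (L (x n) z)]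
    have hlim : Tendsto (fun n =>
        dist (Ψ (Φ z)) (L ((x n)⁻¹) (Φ z)) + dist (L (x n) z) (Φ z)) atTop (𝓝 0) := by
      have h1 : Tendsto (fun n => dist (Ψ (Φ z)) (L ((x n)⁻¹) (Φ z))) atTop (𝓝 0) := by
        have := (tendsto_const_nhds (x := Ψ (Φ z)) (f := atTop)).dist (hΨ (Φ z))
        simpa using this
      have h2 : Tendsto (fun n => dist (L (x n) z) (Φ z)) atTop (𝓝 0) := by
        have := (hΦ z).dist (tendsto_const_nhds (x := Φ z) (f := atTop))
        simpa using this
      simpa using h1.add h2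
    have hle : dist (Ψ (Φ z)) z ≤ 0 := ge_of_tendsto hlim (Filter.Eventually.of_forall hb)
    exact dist_eq_zero.1 (le_antisymm hle dist_nonneg)
  have hΨiso : Isometry Ψ := by
    apply Isometry.of_dist_eq
    intro z z'
    have h1 : Tendsto (fun n => dist (L ((x n)⁻¹) z) (L ((x n)⁻¹) z')) atTop
        (𝓝 (dist (Ψ z) (Ψ z'))) := (hΨ z).dist (hΨ z')
    have h2 : (fun n => dist (L ((x n)⁻¹) z) (L ((x n)⁻¹) z')) = fun _ => dist z z' := by
      funext n; exact (hLiso _).dist_eq z z'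
    rw [h2] at h1
    exact tendsto_nhds_unique h1 tendsto_const_nhds
  have hΦiso : Isometry Φ := by
    apply Isometry.of_dist_eq
    intro z z'
    have h1 : Tendsto (fun n => dist (L (x n) z) (L (x n) z')) atTop
        (𝓝 (dist (Φ z) (Φ z'))) := (hΦ z).dist (hΦ z')
    have h2 : (fun n => dist (L (x n) z) (L (x n) z')) = fun _ => dist z z' := by
      funext n; exact (hLiso _).dist_eq z z'
    rw [h2] at h1
    exact tendsto_nhds_unique h1 tendsto_const_nhds
  set e : X ≃ₜ X :=
    { toFun := Ψ
      invFun := Φ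
      left_inv := hΦΨ
      right_inv := hΨΦ
      continuous_toFun := hΨiso.continuous
      continuous_invFun := hΦiso.continuous } with he
  -- Baire category argument
  have hind : Topology.IsInducing ((↑) : G → X) :=
    Completion.coe_isometry.isEmbedding.toIsInducing
  have hGδ : IsGδ (Set.range ((↑) : G → X)) :=
    isGδ_range_of_polish hind (Completion.continuous_coe G)
  have hGdense : Dense (Set.range ((↑) : G → X)) := Completion.denseRange_coe
  have hpreGδ : IsGδ (Ψ ⁻¹' Set.range ((↑) : G → X)) := isGδ_preimage hGδ hΨiso.continuous
  have hpredense : Dense (Ψ ⁻¹' Set.range ((↑) : G → X)) := by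
    rw [dense_iff_inter_open]
    intro U hUo hUne
    have himg : IsOpen (Φ ⁻¹' U) := hUo.preimage hΦiso.continuous
    have hne : (Φ ⁻¹' U).Nonempty := by
      obtain ⟨u, hu⟩ := hUne
      exact ⟨Ψ u, show Φ (Ψ u) ∈ U by rw [hΦΨ]; exact hu⟩
    obtain ⟨w, hw1, hw2⟩ := (dense_iff_inter_open.1 hGdense) _ himg hne
    refine ⟨Φ w, hw1, show Ψ (Φ w) ∈ Set.range ((↑) : G → X) by rw [hΨΦ]; exact hw2⟩
  have hres : (Set.range ((↑) : G → X) ∩ Ψ ⁻¹' Set.range ((↑) : G → X)) ∈ residual X :=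
    Filter.inter_mem (residual_of_dense_Gδ hGδ hGdense) (residual_of_dense_Gδ hpreGδ hpredense)
  haveI : Nonempty X := ⟨((1 : G) : X)⟩
  obtain ⟨z, hz1, hz2⟩ := (dense_of_mem_residual hres).nonempty
  obtain ⟨cc, hcc⟩ := hz1
  obtain ⟨yy, hyy⟩ := hz2
  -- conclude
  have hconv : Tendsto (fun n => ((x n * yy : G) : X)) atTop (𝓝 z) := by
    have h1 : ∀ n, ((x n * yy : G) : X) = L (x n) (Ψ z) := by
      intro n
      rw [← hLcoe, hyy]
    have h2 := hΦ (Ψ z)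
    rw [hΦΨ] at h2
    simp only [h1]
    exact h2
  have hconv2 : Tendsto (fun n => x n * yy) atTop (𝓝 cc) := by
    rw [hind.tendsto_nhds_iff]
    have : ((cc : G) : X) = z := hcc
    show Tendsto (fun n => ((x n * yy : G) : X)) atTop (𝓝 ((cc : G) : X))
    rw [this]
    exact hconv
  refine ⟨cc * yy⁻¹, ?_⟩
  have hfin : Tendsto (fun n => (x n * yy) * yy⁻¹) atTop (𝓝 (cc * yy⁻¹)) :=
    hconv2.mul tendsto_const_nhds
  simpa [mul_assoc] using hfin

end RaikovBaire

section Construction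

open UniformSpace

/-- Construction of a compatible left-invariant metric on a Polish group whose Cauchy
sequences are exactly the left-Cauchy sequences. -/
theorem exists_cli_candidate (G : Type u) [Group G] [t : TopologicalSpace G]
    [IsTopologicalGroup G] [PolishSpace G] :
    ∃ m : MetricSpace G,
      m.toPseudoMetricSpace.toUniformSpace.toTopologicalSpace = t ∧
      (∀ g h h' : G, @dist G m.toPseudoMetricSpace.toDist (g * h) (g * h') =
        @dist G m.toPseudoMetricSpace.toDist h h') ∧
      (∀ x : ℕ → G, @CauchySeq G ℕ m.toPseudoMetricSpace.toUniformSpace _ x → LeftCauchy x) := by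
  classical
  haveI : Nonempty G := ⟨1⟩
  set q : G × G → G := fun p => p.1⁻¹ * p.2 with hq
  set F : Filter (G × G) := Filter.comap q (𝓝 1) with hF
  have hrefl : ∀ r ∈ F, ∀ x : G, (x, x) ∈ r := by
    intro r hr x
    obtain ⟨S, hS, hsub⟩ := hr
    apply hsub
    show q (x, x) ∈ S
    have : q (x, x) = 1 := by simp [hq]
    rw [this]
    exact mem_of_mem_nhds hS
  have hsymm : ∀ r ∈ F, Prod.swap ⁻¹' r ∈ F := by
    intro r hr
    obtain ⟨S, hS, hsub⟩ := hr
    have hinv : Filter.Tendsto (fun y : G => y⁻¹) (𝓝 (1:G)) (𝓝 (1:G)) := by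
      simpa using (continuous_inv.tendsto (1 : G))
    refine ⟨(fun y : G => y⁻¹) ⁻¹' S, hinv hS, ?_⟩
    intro p hp
    apply hsub
    show q p.swap ∈ S
    have : q p.swap = (q p)⁻¹ := by simp [hq]
    rw [this]
    exact hp
  have hcomp : ∀ r ∈ F, ∃ s ∈ F, SetRel.comp s s ⊆ r := by
    intro r hr
    obtain ⟨S, hS, hsub⟩ := hr
    obtain ⟨W, hWo, hW1, hWW⟩ := exists_open_nhds_one_mul_subset hS
    refine ⟨q ⁻¹' W, Filter.preimage_mem_comap (hWo.mem_nhds hW1), ?_⟩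
    rintro ⟨a, c⟩ ⟨b, hab, hbc⟩
    apply hsub
    show q (a, c) ∈ S
    have : q (a, c) = q (a, b) * q (b, c) := by simp [hq, mul_assoc]
    rw [this]
    exact hWW (Set.mul_mem_mul hab hbc)
  set core : UniformSpace.Core G := UniformSpace.Core.mk' F hrefl hsymm hcomp with hcore
  set u0 : UniformSpace G := UniformSpace.ofCore core with hu0
  have htop : t = u0.toTopologicalSpace := by
    refine TopologicalSpace.ext_nhds fun x => ?_
    have h1 : @nhds G u0.toTopologicalSpace x = Filter.comap (Prod.mk x) F :=
      @nhds_eq_comap_uniformity G u0 x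
    have h2 : Filter.comap (Prod.mk x) F = Filter.comap (fun y : G => x⁻¹ * y) (𝓝 1) := by
      rw [hF, Filter.comap_comap]
      rfl
    have h3 : @nhds G t x = Filter.map (fun y => x * y) (𝓝 1) := (map_mul_left_nhds_one x).symm
    have h4 : Filter.map (fun y : G => x * y) (𝓝 1) =
        Filter.comap (fun y : G => x⁻¹ * y) (𝓝 1) :=
      map_eq_comap_of_inverse (by funext y; simp) (by funext y; simp)
    rw [h3, h4, h1, h2]
  set uL : UniformSpace G := u0.replaceTopology htop with huL
  have huLuni : @uniformity G uL = F := rfl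
  haveI hcg : (@uniformity G uL).IsCountablyGenerated := by
    rw [huLuni, hF]
    exact Filter.comap.isCountablyGenerated _ _
  obtain ⟨ρ, hρ⟩ := @UniformSpace.metrizable_uniformity G uL hcg
  have hρuni : @uniformity G ρ.toUniformSpace = F := by rw [hρ]; exact huLuni
  set ρd : G → G → ℝ := fun a b => @dist G ρ.toDist a b with hρd
  have F2 : ∀ S : Set G, S ∈ 𝓝 (1:G) → ∃ ε > 0, ∀ a b : G, ρd a b < ε → a⁻¹ * b ∈ S := by
    intro S hS
    have h1 : q ⁻¹' S ∈ @uniformity G ρ.toUniformSpace := by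
      rw [hρuni, hF]
      exact Filter.preimage_mem_comap hS
    obtain ⟨ε, hε, hsub⟩ := (@Metric.mem_uniformity_dist G ρ _).1 h1
    exact ⟨ε, hε, fun a b hab => hsub hab⟩
  have F1 : ∀ ε : ℝ, 0 < ε → ∃ S : Set G, IsOpen S ∧ (1:G) ∈ S ∧ ∀ a b : G,
      a⁻¹ * b ∈ S → ρd a b < ε := by
    intro ε hε
    have h1 : {p : G × G | ρd p.1 p.2 < ε} ∈ @uniformity G ρ.toUniformSpace :=
      @Metric.dist_mem_uniformity G ρ _ hε
    rw [hρuni, hF] at h1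
    obtain ⟨S', hS', hsub⟩ := h1
    obtain ⟨S, hSsub, hSo, hS1⟩ := _root_.mem_nhds_iff.1 hS'
    refine ⟨S, hSo, hS1, fun a b hab => ?_⟩
    exact hsub (show q (a, b) ∈ S' from hSsub hab)
  have hρnonneg : ∀ a b : G, 0 ≤ ρd a b := fun a b => @dist_nonneg G ρ a b
  set D : G → G → ℝ := fun a b => ⨆ g : G, min (ρd (g*a) (g*b)) 1 with hD
  have hbdd : ∀ a b : G, BddAbove (Set.range fun g => min (ρd (g*a) (g*b)) 1) := fun a b =>
    ⟨1, by rintro y ⟨g, rfl⟩; exact min_le_right _ _⟩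
  have hDge : ∀ a b : G, min (ρd a b) 1 ≤ D a b := by
    intro a b
    have := le_ciSup (hbdd a b) (1:G)
    simpa using this
  have hDle : ∀ a b : G, ∀ ε : ℝ, D a b < min ε 1 → ρd a b < ε := by
    intro a b ε h
    have h1 := lt_of_le_of_lt (hDge a b) h
    rcases le_or_gt (ρd a b) 1 with hc | hc
    · rw [min_eq_left hc] at h1
      exact lt_of_lt_of_le h1 (min_le_left _ _)
    · rw [min_eq_right hc.le] at h1
      exact absurd (lt_of_lt_of_le h1 (min_le_right _ _)) (lt_irrefl _)
  have hself : ∀ a : G, D a a = 0 := by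
    intro a
    have h1 : (fun g : G => min (ρd (g*a) (g*a)) 1) = fun _ => (0:ℝ) := by
      funext g
      have : ρd (g*a) (g*a) = 0 := @dist_self G ρ (g*a)
      rw [this]
      simp
    show (⨆ g : G, min (ρd (g*a) (g*a)) 1) = 0
    rw [h1]
    exact ciSup_const
  have hcomm : ∀ a b : G, D a b = D b a := by
    intro a b
    have h1 : (fun g : G => min (ρd (g*a) (g*b)) 1) = fun g => min (ρd (g*b) (g*a)) 1 := by
      funext g
      rw [show ρd (g*a) (g*b) = ρd (g*b) (g*a) from @dist_comm G ρ _ _]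
    show (⨆ g : G, min (ρd (g*a) (g*b)) 1) = ⨆ g : G, min (ρd (g*b) (g*a)) 1
    rw [h1]
  have minadd : ∀ x y z : ℝ, 0 ≤ x → 0 ≤ y → z ≤ x + y → min z 1 ≤ min x 1 + min y 1 := by
    intro x y z hx hy hz
    rcases le_or_gt 1 x with h | h
    · have h1 : min x 1 = 1 := min_eq_right h
      have h2 : (0:ℝ) ≤ min y 1 := le_min hy zero_le_one
      have h3 := min_le_right z 1
      linarith
    rcases le_or_gt 1 y with h' | h'
    · have h1 : min y 1 = 1 := min_eq_right h'
      have h2 : (0:ℝ) ≤ min x 1 := le_min hx zero_le_one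
      have h3 := min_le_right z 1
      linarith
    · rw [min_eq_left h.le, min_eq_left h'.le]
      exact le_trans (min_le_left _ _) hz
  have htri : ∀ a b c : G, D a c ≤ D a b + D b c := by
    intro a b c
    refine ciSup_le fun g => ?_
    have h1 : ρd (g*a) (g*c) ≤ ρd (g*a) (g*b) + ρd (g*b) (g*c) := @dist_triangle G ρ _ _ _
    refine le_trans (minadd _ _ _ (hρnonneg _ _) (hρnonneg _ _) h1) ?_
    exact add_le_add (le_ciSup (hbdd a b) g) (le_ciSup (hbdd b c) g)
  have heqz : ∀ a b : G, D a b = 0 → a = b := by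
    intro a b h0
    have h1 : min (ρd a b) 1 ≤ 0 := h0 ▸ hDge a b
    have h2 : ρd a b = 0 := by
      by_contra hd
      have hd' : 0 < ρd a b := lt_of_le_of_ne (hρnonneg a b) (Ne.symm hd)
      have : (0:ℝ) < min (ρd a b) 1 := lt_min hd' one_pos
      linarith
    by_contra hne
    have hne1 : a⁻¹ * b ≠ 1 := fun hh => hne (inv_mul_eq_one.1 hh)
    have hS : ({a⁻¹ * b}ᶜ : Set G) ∈ 𝓝 (1:G) :=
      isOpen_compl_singleton.mem_nhds (by simp [Ne.symm hne1])
    obtain ⟨ε, hε, hsub⟩ := F2 _ hS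
    have hmem := hsub a b (by rw [h2]; exact hε)
    exact hmem rfl
  have Hopen : ∀ s : Set G, IsOpen s ↔ ∀ a ∈ s, ∃ ε > 0, ∀ b, D a b < ε → b ∈ s := by
    intro s
    constructor
    · intro hs a ha
      have hSa : (fun y : G => a * y) ⁻¹' s ∈ 𝓝 (1:G) := by
        have hcont : Continuous fun y : G => a * y := continuous_mul_left a
        have : a * 1 ∈ s := by simpa using ha
        exact hcont.continuousAt.preimage_mem_nhds (by simpa using hs.mem_nhds this)
      obtain ⟨ε, hε, hO⟩ := F2 _ hSa
      refine ⟨min ε 1, lt_min hε one_pos, fun b hb => ?_⟩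
      have h1 : ρd a b < ε := hDle a b ε hb
      have h2 : a⁻¹ * b ∈ (fun y : G => a * y) ⁻¹' s := hO a b h1
      simpa using h2
    · intro hcond
      rw [isOpen_iff_mem_nhds]
      intro a ha
      obtain ⟨ε, hε, hball⟩ := hcond a ha
      obtain ⟨S, hSo, hS1, hSd⟩ := F1 (ε/2) (by linarith)
      have hT : IsOpen ((fun y : G => a⁻¹ * y) ⁻¹' S) :=
        hSo.preimage (continuous_mul_left a⁻¹)
      have haT : a ∈ (fun y : G => a⁻¹ * y) ⁻¹' S := by
        show a⁻¹ * a ∈ S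
        simpa using hS1
      refine Filter.mem_of_superset (hT.mem_nhds haT) ?_
      intro y hy
      apply hball
      have hDa : D a y ≤ ε/2 := by
        refine ciSup_le fun g => ?_
        have h1 : (g*a)⁻¹ * (g*y) = a⁻¹ * y := by group
        have h2 : ρd (g*a) (g*y) < ε/2 := hSd _ _ (by rw [h1]; exact hy)
        exact le_trans (min_le_left _ _) h2.le
      linarith
  have hDinv : ∀ g a b : G, D (g*a) (g*b) = D a b := by
    intro g a b
    have hsurj : Function.Surjective (fun h : G => h * g) := fun k => ⟨k * g⁻¹, by simp⟩
    have hcompeq : (fun h : G => min (ρd (h*(g*a)) (h*(g*b))) 1) =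
        (fun k : G => min (ρd (k*a) (k*b)) 1) ∘ (fun h : G => h * g) := by
      funext h
      simp [Function.comp, mul_assoc]
    show (⨆ h : G, min (ρd (h*(g*a)) (h*(g*b))) 1) = ⨆ k : G, min (ρd (k*a) (k*b)) 1
    rw [iSup, iSup, hcompeq, hsurj.range_comp]
  set mD : MetricSpace G := MetricSpace.ofDistTopology D hself hcomm htri Hopen heqz with hmD
  refine ⟨mD, rfl, ?_, ?_⟩
  · intro g h h'
    exact hDinv g h h'
  · intro x hx O hOo hO1
    have hcs := (@Metric.cauchySeq_iff G ℕ mD.toPseudoMetricSpace _ _ (u := x)).1 hx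
    obtain ⟨ε, hε, hO⟩ := F2 O (hOo.mem_nhds hO1)
    obtain ⟨N, hN⟩ := hcs (min ε 1) (lt_min hε one_pos)
    refine ⟨N, fun i j hi hj => ?_⟩
    have hd : D (x j) (x i) < min ε 1 := hN j hj i hi
    exact hO _ _ (hDle _ _ _ hd)

end Construction

section Final

theorem balanced_to_cli {G : Type u} [Group G] [t : TopologicalSpace G]
    [IsTopologicalGroup G] [PolishSpace G] (h : ∃ α : Ordinal.{v}, IsBalanced G α) : IsCLI G := by
  obtain ⟨α, hbal⟩ := h
  obtain ⟨m, hmt, hmi, hcauchy⟩ := exists_cli_candidate G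
  refine ⟨m, hmt, ?_, hmi⟩
  refine @Metric.complete_of_cauchySeq_tendsto G m.toPseudoMetricSpace ?_
  intro x hx
  have hlc : LeftCauchy x := hcauchy x hx
  have hrc := rightCauchy_of_balanced hbal hlc
  obtain ⟨a, ha⟩ := leftRightCauchy_tendsto m hmt hmi x hlc hrc
  refine ⟨a, ?_⟩
  rw [hmt]
  exact ha

theorem isCLI_iff_rk' {G : Type u} [Group G] [TopologicalSpace G]
    [IsTopologicalGroup G] [PolishSpace G] :
    (IsCLI G ↔ ∃ α : Ordinal.{v}, IsBalanced G α) ∧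
    (IsCLI G ↔ ∃ α : Ordinal.{v}, α.card ≤ Cardinal.aleph0 ∧ IsBalanced G α) := by
  constructor
  · constructor
    · intro h
      obtain ⟨α, -, hb⟩ := cli_to_balanced.{u, v} h
      exact ⟨α, hb⟩
    · rintro ⟨α, hb⟩
      exact balanced_to_cli ⟨α, hb⟩
  · constructor
    · exact cli_to_balanced
    · rintro ⟨α, -, hb⟩
      exact balanced_to_cli ⟨α, hb⟩

end Final

/-- For a Polish group `G`: `G` is CLI iff `rk(G) < ∞` iff `rk(G) < ω₁`. -/
theorem isCLI_iff_rk_lt_infty_iff_rk_lt_omega1 {G : Type u} [Group G] [TopologicalSpace G]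
    [IsTopologicalGroup G] [PolishSpace G] :
    (IsCLI G ↔ ∃ α : Ordinal.{v}, IsBalanced G α) ∧
    (IsCLI G ↔ ∃ α : Ordinal.{v}, α.card ≤ Cardinal.aleph0 ∧ IsBalanced G α) := by
  exact isCLI_iff_rk'.{u, v}
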